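/- arXiv:1412.2582 — 2 statements merged into one kernel-verified Lean document; each statement's English description precedes it below -/
import Mathlib

section
/- Let X ⊆ A^G be an effectively closed subshift over a finitely generated group G. Then there exists a decidable set C of pattern codings such that X = X_C. -/
open scoped Classical

noncomputable section

namespace SDG

/-! ### Relativized computability -/

/-- Partial recursive functions `ℕ →. ℕ` relative to an oracle `O`. -/
inductive NatPartrecIn (O : ℕ →. ℕ) : (ℕ →. ℕ) → Prop
  | oracle : NatPartrecIn O O
  | zero : NatPartrecIn O (pure 0)
  | succ : NatPartrecIn O Nat.succ
  | left : NatPartrecIn O ↑fun n : ℕ => n.unpair.1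
  | right : NatPartrecIn O ↑fun n : ℕ => n.unpair.2
  | pair {f g} : NatPartrecIn O f → NatPartrecIn O g →
      NatPartrecIn O fun n => Nat.pair <$> f n <*> g n
  | comp {f g} : NatPartrecIn O f → NatPartrecIn O g →
      NatPartrecIn O fun n => g n >>= f
  | prec {f g} : NatPartrecIn O f → NatPartrecIn O g →
      NatPartrecIn O (Nat.unpaired fun a n =>
        n.rec (f a) fun y IH => do let i ← IH; g (Nat.pair a (Nat.pair y i)))
  | rfind {f} : NatPartrecIn O f →
      NatPartrecIn O fun a => Nat.rfind fun n => (fun m => m = 0) <$> f (Nat.pair a n)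

/-- A partial function between `Primcodable` types is partial recursive in the oracle `O`. -/
def PartrecIn (O : ℕ →. ℕ) {α σ : Type} [Primcodable α] [Primcodable σ] (f : α →. σ) : Prop :=
  NatPartrecIn O fun n =>
    Part.bind (Part.ofOption (Encodable.decode (α := α) n)) fun a => (f a).map Encodable.encode

/-- A predicate is recursively enumerable in the oracle `O` if it is the domain of a partial
function recursive in `O`. -/
def RePredIn (O : ℕ →. ℕ) {α : Type} [Primcodable α] (p : α → Prop) : Prop :=
  PartrecIn O fun a => Part.assert (p a) fun _ => Part.some ()

/-- The characteristic function (as an oracle `ℕ →. ℕ`) of a set `L` of elements of a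
`Primcodable` type: on the code of an element of `L` it answers `1`, elsewhere `0`. -/
def charFun {α : Type} [Primcodable α] (L : Set α) : ℕ →. ℕ :=
  fun n => Part.some (if ∃ a ∈ L, Encodable.encode a = n then 1 else 0)

/-! ### Finitely generated groups, words and pattern codings -/

variable {G : Type} [Group G]

/-- The group element represented by a word over the generators `S`. -/
def wordEval {k : ℕ} (S : Fin k → G) (w : List (Fin k)) : G :=
  (w.map S).prod

/-- `S : Fin k → G` is a finite symmetric generating family containing the identity. -/
def IsGenData {k : ℕ} (S : Fin k → G) : Prop :=
  (∃ i, S i = 1) ∧ (∀ i, ∃ j, S j = (S i)⁻¹) ∧ Subgroup.closure (Set.range S) = ⊤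

/-- The word problem of `G` with respect to the generating family `S`. -/
def WP {k : ℕ} (S : Fin k → G) : Set (List (Fin k)) :=
  {w | wordEval S w = 1}

/-- A pattern coding over the alphabet `A`: a finite list of pairs (word, symbol). -/
abbrev PatternCoding (k : ℕ) (A : Type) : Type :=
  List (List (Fin k) × A)

/-- The subshift defined by a set `C` of pattern codings: configurations in which no translate
of a coded pattern occurs. -/
def XC {k : ℕ} (S : Fin k → G) {A : Type} (C : Set (PatternCoding k A)) : Set (G → A) :=
  {x | ¬ ∃ (g : G) (c : PatternCoding k A), c ∈ C ∧ ∀ p ∈ c, x (g * wordEval S p.1) = p.2}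

/-- A set is effectively closed if it is defined by a recursively enumerable set of
pattern codings. -/
def EffectivelyClosed {k : ℕ} (S : Fin k → G) {A : Type} [Primcodable A]
    (X : Set (G → A)) : Prop :=
  ∃ C : Set (PatternCoding k A), REPred (· ∈ C) ∧ X = XC S C

/-- A set is `G`-effectively closed if it is defined by a set of pattern codings which is
recursively enumerable with oracle the word problem of `G`. -/
def GEffectivelyClosed {k : ℕ} (S : Fin k → G) {A : Type} [Primcodable A]
    (X : Set (G → A)) : Prop :=
  ∃ C : Set (PatternCoding k A), RePredIn (charFun (WP S)) (· ∈ C) ∧ X = XC S C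

/-- A pattern coding is consistent if words representing the same group element receive the
same symbol. -/
def Consistent {k : ℕ} (S : Fin k → G) {A : Type} (c : PatternCoding k A) : Prop :=
  ∀ p ∈ c, ∀ q ∈ c, wordEval S p.1 = wordEval S q.1 → p.2 = q.2

/-! ### Subshifts, SFTs, sofic subshifts -/

/-- `X ⊆ A^G` is a subshift: closed (for the product of the discrete topology) and
shift-invariant. -/
def IsSubshift {A : Type} (X : Set (G → A)) : Prop :=
  (letI : TopologicalSpace A := ⊥; IsClosed X) ∧
    ∀ x ∈ X, ∀ g : G, (fun h => x (g⁻¹ * h)) ∈ X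

/-- A pattern with finite support over the alphabet `A`. -/
structure Pattern (G : Type) (A : Type) where
  supp : Finset G
  val : (g : G) → g ∈ supp → A

/-- The pattern `p` occurs in the configuration `x` at position `g`. -/
def PatternOccurs {A : Type} (p : Pattern G A) (x : G → A) (g : G) : Prop :=
  ∀ (h : G) (hh : h ∈ p.supp), x (g * h) = p.val h hh

/-- The subshift defined by a set of forbidden patterns. -/
def XPat {A : Type} (Fs : Set (Pattern G A)) : Set (G → A) :=
  {x | ¬ ∃ (g : G) (p : Pattern G A), p ∈ Fs ∧ PatternOccurs p x g}

/-- A subshift of finite type: defined by a finite set of forbidden patterns. -/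
def IsSFT {A : Type} (X : Set (G → A)) : Prop :=
  ∃ Fs : Set (Pattern G A), Fs.Finite ∧ X = XPat Fs

/-- A witness that `X` is sofic: an SFT `Y` over a finite alphabet `B` together with a factor
code (continuous shift-equivariant surjection) from `Y` onto `X`. -/
structure SoficVia (G : Type) [Group G] {A : Type} (X : Set (G → A)) : Type 1 where
  B : Type
  finB : Fintype B
  Y : Set (G → B)
  sft : IsSFT Y
  subY : IsSubshift Y
  phi : (G → B) → (G → A)
  cont : letI : TopologicalSpace B := ⊥
         letI : TopologicalSpace A := ⊥
         ContinuousOn phi Y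
  equiv : ∀ y ∈ Y, ∀ g : G, phi (fun h => y (g⁻¹ * h)) = fun h => phi y (g⁻¹ * h)
  image : phi '' Y = X

/-- A subshift is sofic if it is the image of an SFT under a factor code. -/
def IsSofic {A : Type} (X : Set (G → A)) : Prop :=
  Nonempty (SoficVia G X)

/-- A factor code from `X` onto `Y`: continuous (discrete product topologies),
shift-equivariant and surjective. -/
def FactorCode {A B : Type} (X : Set (G → A)) (Y : Set (G → B))
    (φ : (G → A) → (G → B)) : Prop :=
  (letI : TopologicalSpace A := ⊥
   letI : TopologicalSpace B := ⊥
   ContinuousOn φ X) ∧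
  (∀ x ∈ X, ∀ g : G, φ (fun h => x (g⁻¹ * h)) = fun h => φ x (g⁻¹ * h)) ∧
  φ '' X = Y

/-- Two subshifts are conjugate if there is a shift-equivariant homeomorphism between them. -/
def Conjugate {A B : Type} (X : Set (G → A)) (Y : Set (G → B)) : Prop :=
  ∃ (φ : (G → A) → (G → B)) (ψ : (G → B) → (G → A)),
    FactorCode X Y φ ∧ FactorCode Y X ψ ∧
    (∀ x ∈ X, ψ (φ x) = x) ∧ (∀ y ∈ Y, φ (ψ y) = y)

/-- The one-or-less subshift: configurations with at most one occurrence of the symbol `1`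
(represented by `true`). -/
def Xle1 (G : Type) : Set (G → Bool) :=
  {x | ∀ g h : G, x g = true → x h = true → g = h}

/-! ### `G`-machines -/

/-- A `G`-machine: finite set of states, finite tape alphabet `A` with a blank symbol, initial
state, accepting states, and a transition function moving with the generators `Fin k`. -/
structure GMachine (k : ℕ) (A : Type) : Type 1 where
  Q : Type
  finQ : Fintype Q
  blank : A
  q0 : Q
  QF : Set Q
  delta : A × Q → A × Q × Fin k

/-- One step of a `G`-machine in the fixed head model: if `δ(x(1),q) = (a,q',s)` then the new
configuration is `σ_{s⁻¹} x̃` where `x̃` is `x` with the value at `1` replaced by `a`. -/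
def GMachine.step {k : ℕ} {A : Type} (M : GMachine k A) (S : Fin k → G) :
    (G → A) × M.Q → (G → A) × M.Q :=
  fun xq =>
    let t := M.delta (xq.1 1, xq.2)
    let xt : G → A := Function.update xq.1 1 t.1
    (fun h => xt (S t.2.2 * h), t.2.1)

/-- The configuration which equals the pattern `p` on its support and `blank` elsewhere. -/
def Pattern.config {A : Type} (p : Pattern G A) (blank : A) : G → A :=
  fun g => if h : g ∈ p.supp then p.val g h else blank

/-- The `G`-machine `M` accepts the pattern `p` if starting from the configuration `x^p` in the
initial state it eventually reaches an accepting state. -/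
def GMachine.Accepts {k : ℕ} {A : Type} (M : GMachine k A) (S : Fin k → G)
    (p : Pattern G A) : Prop :=
  ∃ n : ℕ, ((M.step S)^[n] (p.config M.blank, M.q0)).2 ∈ M.QF

/-- A set of patterns is `G`-recursively enumerable if some `G`-machine accepts exactly its
elements. -/
def GRecEnum {k : ℕ} (S : Fin k → G) {A : Type} (L : Set (Pattern G A)) : Prop :=
  ∃ M : GMachine k A, ∀ p : Pattern G A, M.Accepts S p ↔ p ∈ L

/-- The consistent pattern coding `c` defines the pattern `p`. -/
def Defines {k : ℕ} (S : Fin k → G) {A : Type} (c : PatternCoding k A)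
    (p : Pattern G A) : Prop :=
  (∀ g : G, g ∈ p.supp ↔ ∃ q ∈ c, wordEval S q.1 = g) ∧
  ∀ q ∈ c, ∀ hg : wordEval S q.1 ∈ p.supp, p.val (wordEval S q.1) hg = q.2

/-- `p(C)`: the set of patterns defined by the consistent pattern codings of `C`. -/
def patternsOf {k : ℕ} (S : Fin k → G) {A : Type} (C : Set (PatternCoding k A)) :
    Set (Pattern G A) :=
  {p | ∃ c ∈ C, Consistent S c ∧ Defines S c p}

/-- A set of patterns is closed by extensions if any pattern extending a pattern of the set
also belongs to the set. -/
def ClosedByExtensions {A : Type} (L : Set (Pattern G A)) : Prop :=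
  ∀ (p₁ p₂ : Pattern G A) (hsub : p₁.supp ⊆ p₂.supp),
    (∀ (g : G) (hg : g ∈ p₁.supp), p₂.val g (hsub hg) = p₁.val g hg) →
    p₁ ∈ L → p₂ ∈ L

/-! ### Balls, ends, amenability -/

/-- The ball of radius `n` in the word metric given by `S`. -/
def ballS {k : ℕ} (S : Fin k → G) (n : ℕ) : Set G :=
  {x | ∃ w : List (Fin k), w.length ≤ n ∧ wordEval S w = x}

/-- Adjacency in the Cayley graph restricted to the set `V`. -/
def Adj {k : ℕ} (S : Fin k → G) (V : Set G) (a b : G) : Prop :=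
  a ∈ V ∧ b ∈ V ∧ ∃ i, a * S i = b

/-- Reachability inside `V` in the Cayley graph of `(G,S)`. -/
def Reach {k : ℕ} (S : Fin k → G) (V : Set G) (a b : G) : Prop :=
  Relation.ReflTransGen (Adj S V) a b

/-- `G` has at least two ends: for some `n`, the complement of the ball of radius `n` in the
Cayley graph has at least two infinite connected components. -/
def HasTwoOrMoreEnds {k : ℕ} (S : Fin k → G) : Prop :=
  ∃ (n : ℕ) (x y : G), x ∉ ballS S n ∧ y ∉ ballS S n ∧
    {z | Reach S (ballS S n)ᶜ x z}.Infinite ∧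
    {z | Reach S (ballS S n)ᶜ y z}.Infinite ∧
    ¬ Reach S (ballS S n)ᶜ x y

/-- The Følner condition: `G` is amenable. -/
def FolnerAmenable (G : Type) [Group G] : Prop :=
  ∀ (K : Finset G) (ε : ℝ), 0 < ε →
    ∃ F : Finset G, F.Nonempty ∧ ∀ k ∈ K,
      ((F \ F.image (fun x => x * k)).card : ℝ) < ε * F.card

/-! ### `G × ℤ`, presentations, hardness and the domino problems -/

/-- Generators of `G × ℤ`: the generators of `G` paired with `0`, together with `(1,±1)`. -/
def prodGens {k : ℕ} (S : Fin k → G) : Fin (k + 2) → G × Multiplicative ℤ :=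
  fun i =>
    if h : (i : ℕ) < k then (S ⟨i, h⟩, 1)
    else if (i : ℕ) = k then (1, Multiplicative.ofAdd 1)
    else (1, Multiplicative.ofAdd (-1))

/-- The element of the free group over the generator indices represented by a word. -/
def freeWord {k : ℕ} (w : List (Fin k)) : FreeGroup (Fin k) :=
  (w.map FreeGroup.of).prod

/-- `G` is recursively presented with respect to `S`: there is a recursively enumerable set of
relators (words over the generators) whose normal closure in the free group over the
generator indices is the kernel of the evaluation map. -/
def RecursivelyPresented {k : ℕ} (S : Fin k → G) : Prop :=
  ∃ R : Set (List (Fin k)), REPred (· ∈ R) ∧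
    MonoidHom.ker (FreeGroup.lift S) = Subgroup.normalClosure (freeWord '' R)

/-- `L` is hard for the class of predicates recursively enumerable in the oracle `O`
(equivalently, hard for the halting problem of machines with oracle `O`): every
such predicate many-one reduces to `L` via a computable function. -/
def OracleREHard {α : Type} [Primcodable α] (O : ℕ →. ℕ) (L : Set α) : Prop :=
  ∀ p : ℕ → Prop, RePredIn O p → ∃ f : ℕ → α, Computable f ∧ ∀ n, p n ↔ f n ∈ L

/-- The domino problem of `(K,T)`: pairs `(N, F)` of an alphabet size and a finite list of
pattern codings over `ℕ` such that no configuration with symbols `< N` avoids `F`. -/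
def DP {K : Type} [Group K] {m : ℕ} (T : Fin m → K) : Set (ℕ × List (PatternCoding m ℕ)) :=
  {q | ¬ ∃ x : K → ℕ, (∀ g, x g < q.1) ∧ x ∈ XC T {c | c ∈ q.2}}

/-- The origin constrained domino problem of `(K,T)`: triples `((N,a),F)` such that no
configuration with symbols `< N` and the symbol `a` at the origin avoids `F`. -/
def OCDP {K : Type} [Group K] {m : ℕ} (T : Fin m → K) :
    Set ((ℕ × ℕ) × List (PatternCoding m ℕ)) :=
  {q | ¬ ∃ x : K → ℕ, (∀ g, x g < q.1.1) ∧ x 1 = q.1.2 ∧ x ∈ XC T {c | c ∈ q.2}}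

section Aux

open Nat.Partrec (Code)
open Nat.Partrec.Code

private theorem primrec_drop {β : Type} [Primcodable β] :
    Primrec₂ (fun (l : List β) (n : ℕ) => l.drop n) := by
  have h : Primrec fun p : List β × ℕ =>
      (fun l : List β => l.tail)^[p.2] p.1 :=
    Primrec.nat_iterate Primrec.snd Primrec.fst (Primrec.list_tail.comp Primrec.snd).to₂
  refine h.to₂.of_eq fun l n => ?_
  induction n with
  | zero => simp
  | succ n ih => rw [Function.iterate_succ_apply', ih, List.tail_drop]

private theorem foldr_or_eq {q : ℕ → Bool} :
    ∀ l : List ℕ, (l.foldr (fun m b => q m || b) false = true ↔ ∃ m ∈ l, q m = true) := by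
  intro l
  induction l with
  | nil => simp
  | cons a l ih => simp [ih, Bool.or_eq_true]

private theorem wordEval_nil {G : Type} [Group G] {k : ℕ} (S : Fin k → G) :
    wordEval S ([] : List (Fin k)) = 1 := by
  simp [wordEval]

end Aux

/-- Every effectively closed subshift over a finitely generated group can be
defined by a decidable set of pattern codings. -/
theorem effectivelyClosed_has_decidable_codings
    {G : Type} [Group G] {k : ℕ} (S : Fin k → G) (hS : IsGenData S)
    {A : Type} [Fintype A] [Primcodable A] (X : Set (G → A))
    (hsub : IsSubshift X) (hX : EffectivelyClosed S X) :
    ∃ C : Set (PatternCoding k A), ComputablePred (· ∈ C) ∧ X = XC S C := by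
  classical
  open Nat.Partrec.Code in
  obtain ⟨C, hC, hXC⟩ := hX
  -- extract a code for the r.e. predicate
  obtain ⟨e, he⟩ := Nat.Partrec.Code.exists_code.1 hC
  -- membership in `C` is equivalent to acceptance of the code at some time
  have hmem : ∀ c : PatternCoding k A,
      c ∈ C ↔ ∃ t, (evaln t e (Encodable.encode c)).isSome = true := by
    intro c
    have hev : eval e (Encodable.encode c) =
        (Part.assert (c ∈ C) fun _ => Part.some ()).map Encodable.encode := by
      rw [he]; simp [Encodable.encodek]
    constructor
    · intro hc
      have hx : Encodable.encode () ∈ eval e (Encodable.encode c) := by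
        rw [hev]
        exact Part.mem_map _ (by simp [Part.assert, hc, Part.mem_some_iff])
      obtain ⟨t, ht⟩ := evaln_complete.1 hx
      exact ⟨t, by simp [Option.isSome_iff_exists]; exact ⟨_, ht⟩⟩
    · rintro ⟨t, ht⟩
      obtain ⟨v, hv⟩ := Option.isSome_iff_exists.1 ht
      have hx : v ∈ eval e (Encodable.encode c) := evaln_sound hv
      rw [hev] at hx
      obtain ⟨u, hu, -⟩ := Part.mem_map_iff _ |>.1 hx
      obtain ⟨hd, -⟩ := Part.mem_assert_iff.1 hu
      exact hd
  -- the decidable set of codings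
  set F : PatternCoding k A → Bool := fun d =>
    (List.range (d.length + 1)).foldr
      (fun m b => (evaln m e (Encodable.encode (d.drop m))).isSome || b) false with hF
  refine ⟨{d | F d = true}, ?_, ?_⟩
  · -- computability
    refine ComputablePred.computable_iff.2 ⟨F, ?_, rfl⟩
    have hacc : Primrec₂ fun (c : PatternCoding k A) (t : ℕ) =>
        (evaln t e (Encodable.encode c)).isSome :=
      (Primrec.option_isSome.comp
        (primrec_evaln.comp (((Primrec.snd).pair (Primrec.const e)).pair
          (Primrec.encode.comp Primrec.fst)))).to₂
    have hrange : Primrec fun d : PatternCoding k A => List.range (d.length + 1) :=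
      Primrec.list_range.comp (Primrec.succ.comp Primrec.list_length)
    have hh : Primrec₂ fun (d : PatternCoding k A) (p : ℕ × Bool) =>
        ((evaln p.1 e (Encodable.encode (d.drop p.1))).isSome || p.2) := by
      have h1 : Primrec fun x : PatternCoding k A × (ℕ × Bool) =>
          (evaln x.2.1 e (Encodable.encode (x.1.drop x.2.1))).isSome :=
        hacc.comp (primrec_drop.comp Primrec.fst (Primrec.fst.comp Primrec.snd))
          (Primrec.fst.comp Primrec.snd)
      exact ((Primrec.dom_bool₂ (· || ·)).comp h1
        (Primrec.snd.comp Primrec.snd)).to₂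
    exact (Primrec.list_foldr hrange (Primrec.const false) hh).to_comp
  · -- X = XC S C'
    rw [hXC]
    ext x
    simp only [XC, Set.mem_setOf_eq, not_iff_not]
    constructor
    · -- from C to C'
      rintro ⟨g, c, hc, hmatch⟩
      obtain ⟨t, ht⟩ := (hmem c).1 hc
      refine ⟨g, List.replicate t ([], x g) ++ c, ?_, ?_⟩
      · show F _ = true
        rw [hF]
        refine (foldr_or_eq _).2 ⟨t, ?_, ?_⟩
        · simp [List.mem_range]
        · have hdrop : (List.replicate t (([], x g) : List (Fin k) × A) ++ c).drop t = c := by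
            have := List.drop_left (l₁ := List.replicate t (([], x g) : List (Fin k) × A)) (l₂ := c)
            simpa using this
          rw [hdrop]; exact ht
      · intro p hp
        rcases List.mem_append.1 hp with h | h
        · have := List.eq_of_mem_replicate h
          subst this
          simp [wordEval_nil]
        · exact hmatch p h
    · -- from C' to C
      rintro ⟨g, d, hd, hmatch⟩
      have hd' : F d = true := hd
      rw [hF] at hd'
      obtain ⟨m, -, hm⟩ := (foldr_or_eq _).1 hd'
      refine ⟨g, d.drop m, (hmem _).2 ⟨m, hm⟩, ?_⟩
      intro p hp
      exact hmatch p (List.mem_of_mem_drop hp)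

end SDG
end
end

section
/- Let G be a finitely generated group and A a finite alphabet with at least two symbols. The following are equivalent: (1) G is recursively presented, i.e. G ≅ ⟨S | R⟩ for some recursively enumerable set of relators R ⊆ S*; (2) the word problem WP(G) is recursively enumerable; (3) the set of inconsistent pattern codings over A is recursively enumerable. -/
open scoped Classical

noncomputable section

namespace SDG

/-! ### Finitely generated groups, words and pattern codings -/

variable {G : Type} [Group G]

/-! ### Auxiliary material for Statement 1 -/

section RePredBridge

open Nat.Partrec.Code

/-- A predicate with a computable Σ⁰₁ certificate checker is r.e. -/
lemma rePred_of_exists {α : Type} [Primcodable α] {p : α → Prop} {f : α × ℕ → Bool}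
    (hf : Computable f) (hspec : ∀ a, p a ↔ ∃ n, f (a, n) = true) : REPred p := by
  have h2 : Partrec₂ fun (a : α) (n : ℕ) => (Part.some (f (a, n)) : Part Bool) :=
    Computable.partrec hf
  have h1 : Partrec fun a : α =>
      (Nat.rfind fun n => (Part.some (f (a, n)) : Part Bool)).map fun _ => () :=
    (Partrec.rfind h2).map (((Computable.const ()).comp Computable.fst).to₂)
  refine h1.of_eq fun a => Part.ext fun x => ?_
  rw [Part.mem_map_iff, Part.mem_assert_iff]
  constructor
  · rintro ⟨n, hn, -⟩
    obtain ⟨h1', -⟩ := Nat.mem_rfind.1 hn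
    exact ⟨(hspec a).2 ⟨n, (Part.mem_some_iff.1 h1').symm⟩, by cases x; exact Part.mem_some ()⟩
  · rintro ⟨h, -⟩
    obtain ⟨n, hn⟩ := (hspec a).1 h
    have hdom : (Nat.rfind fun m => (Part.some (f (a, m)) : Part Bool)).Dom :=
      Nat.rfind_dom.2 ⟨n, Part.mem_some_iff.2 hn.symm, fun _ => trivial⟩
    obtain ⟨m, hm⟩ := Part.dom_iff_mem.1 hdom
    exact ⟨m, hm, by cases x; rfl⟩

/-- An r.e. predicate has a primitive recursive Σ⁰₁ certificate checker. -/
lemma exists_of_rePred {α : Type} [Primcodable α] {p : α → Prop} (h : REPred p) :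
    ∃ f : α × ℕ → Bool, Primrec f ∧ ∀ a, p a ↔ ∃ n, f (a, n) = true := by
  obtain ⟨c, hc⟩ := exists_code.1 h
  refine ⟨fun x => (evaln x.2 c (Encodable.encode x.1)).isSome, ?_, fun a => ?_⟩
  · exact Primrec.option_isSome.comp
      (primrec_evaln.comp ((Primrec.snd.pair (Primrec.const c)).pair
        (Primrec.encode.comp Primrec.fst)))
  · have hd : p a ↔ (eval c (Encodable.encode a)).Dom := by
      rw [hc]
      constructor
      · intro hp
        simp [Encodable.encodek, Part.assert, hp]
      · intro hdom
        simp [Encodable.encodek, Part.assert] at hdom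
        exact hdom
    rw [hd, Part.dom_iff_mem]
    constructor
    · rintro ⟨x, hx⟩
      obtain ⟨n, hn⟩ := evaln_complete.1 hx
      exact ⟨n, by simp [Option.isSome_iff_exists]; exact ⟨x, hn⟩⟩
    · rintro ⟨n, hn⟩
      rw [Option.isSome_iff_exists] at hn
      obtain ⟨x, hx⟩ := hn
      exact ⟨x, evaln_complete.2 ⟨n, hx⟩⟩

end RePredBridge

section ListHelpers

variable {α β : Type} [Primcodable α] [Primcodable β]

lemma list_all_eq_foldr (q : β → Bool) (l : List β) :
    l.all q = l.foldr (fun b r => q b && r) true := by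
  induction l with
  | nil => rfl
  | cons b l ih => simp [List.all_cons, ih]

lemma list_any_eq_foldr (q : β → Bool) (l : List β) :
    l.any q = l.foldr (fun b r => q b || r) false := by
  induction l with
  | nil => rfl
  | cons b l ih => simp [List.any_cons, ih]

lemma primrec_list_all {f : α → List β} {p : α → β → Bool}
    (hf : Primrec f) (hp : Primrec₂ p) : Primrec fun a => (f a).all (p a) := by
  have h : Primrec fun a => (f a).foldr (fun b r => p a b && r) true :=
    Primrec.list_foldr hf (Primrec.const true)
      (Primrec.and.comp (hp.comp Primrec.fst (Primrec.fst.comp Primrec.snd))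
        (Primrec.snd.comp Primrec.snd)).to₂
  exact h.of_eq fun a => (list_all_eq_foldr _ _).symm

lemma primrec_list_any {f : α → List β} {p : α → β → Bool}
    (hf : Primrec f) (hp : Primrec₂ p) : Primrec fun a => (f a).any (p a) := by
  have h : Primrec fun a => (f a).foldr (fun b r => p a b || r) false :=
    Primrec.list_foldr hf (Primrec.const false)
      (Primrec.or.comp (hp.comp Primrec.fst (Primrec.fst.comp Primrec.snd))
        (Primrec.snd.comp Primrec.snd)).to₂
  exact h.of_eq fun a => (list_any_eq_foldr _ _).symm

lemma exists_bound_of_forall_exists {L : List β} {g : β → ℕ → Bool}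
    (h : ∀ t ∈ L, ∃ i, g t i = true) :
    ∃ m, ∀ t ∈ L, ∃ i < m, g t i = true := by
  induction L with
  | nil => exact ⟨0, by simp⟩
  | cons b L ih =>
    obtain ⟨m, hm⟩ := ih fun t ht => h t (List.mem_cons_of_mem _ ht)
    obtain ⟨i, hi⟩ := h b (List.mem_cons_self)
    refine ⟨max (i + 1) m, fun t ht => ?_⟩
    rcases List.mem_cons.1 ht with rfl | ht
    · exact ⟨i, lt_of_lt_of_le (Nat.lt_succ_self i) (le_max_left _ _), hi⟩
    · obtain ⟨i', hi', hgi'⟩ := hm t ht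
      exact ⟨i', lt_of_lt_of_le hi' (le_max_right _ _), hgi'⟩

end ListHelpers

section Words

variable {G : Type} [Group G] {k : ℕ}

lemma wordEval_append (S : Fin k → G) (u v : List (Fin k)) :
    wordEval S (u ++ v) = wordEval S u * wordEval S v := by
  simp [wordEval]

/-- Inverse of a word using a symmetrization function. -/
def wInv (j : Fin k → Fin k) (w : List (Fin k)) : List (Fin k) :=
  (w.reverse).map j

lemma wordEval_wInv (S : Fin k → G) {j : Fin k → Fin k} (hj : ∀ i, S (j i) = (S i)⁻¹)
    (w : List (Fin k)) : wordEval S (wInv j w) = (wordEval S w)⁻¹ := by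
  induction w with
  | nil => simp [wInv, wordEval]
  | cons i w ih =>
    have h1 : wInv j (i :: w) = wInv j w ++ [j i] := by simp [wInv]
    rw [h1, wordEval_append, ih]
    simp [wordEval, hj, mul_inv_rev]

lemma freeWord_nil : freeWord ([] : List (Fin k)) = 1 := rfl

lemma freeWord_cons (i : Fin k) (w : List (Fin k)) :
    freeWord (i :: w) = FreeGroup.of i * freeWord w := by
  simp [freeWord]

lemma freeWord_append (u v : List (Fin k)) :
    freeWord (u ++ v) = freeWord u * freeWord v := by
  simp [freeWord]

lemma lift_freeWord (S : Fin k → G) (w : List (Fin k)) :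
    FreeGroup.lift S (freeWord w) = wordEval S w := by
  induction w with
  | nil => simp [freeWord, wordEval]
  | cons i w ih =>
    rw [freeWord_cons, map_mul, ih, FreeGroup.lift_apply_of]
    simp [wordEval]

end Words

section Certificates

variable {G : Type} [Group G] {k : ℕ}

/-- A word with positive letters, as a signed word. -/
def sgn (w : List (Fin k)) : List (Fin k × Bool) :=
  w.map fun i => (i, true)

lemma mk_sgn (w : List (Fin k)) : FreeGroup.mk (sgn w) = freeWord w := by
  induction w with
  | nil => rfl
  | cons i w ih =>
    have h1 : sgn (i :: w) = [(i, true)] ++ sgn w := rfl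
    rw [h1, ← FreeGroup.mul_mk, ih, freeWord_cons]
    rfl

/-- The type of certificates of membership in a normal closure. -/
abbrev Cert (k : ℕ) : Type := List (List (Fin k × Bool) × List (Fin k) × Bool)

/-- The signed word for a single conjugate `u r^±1 u⁻¹`. -/
def conjWord (t : List (Fin k × Bool) × List (Fin k) × Bool) : List (Fin k × Bool) :=
  t.1 ++ (bif t.2.2 then sgn t.2.1 else FreeGroup.invRev (sgn t.2.1)) ++ FreeGroup.invRev t.1

/-- The signed word for a product of conjugates. -/
def certProd (L : Cert k) : List (Fin k × Bool) :=
  (L.map conjWord).flatten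

lemma certProd_nil : certProd ([] : Cert k) = [] := rfl

lemma certProd_cons (t : List (Fin k × Bool) × List (Fin k) × Bool) (L : Cert k) :
    certProd (t :: L) = conjWord t ++ certProd L := by
  simp [certProd]

lemma mk_conjWord (t : List (Fin k × Bool) × List (Fin k) × Bool) :
    FreeGroup.mk (conjWord t) =
      FreeGroup.mk t.1 * (bif t.2.2 then freeWord t.2.1 else (freeWord t.2.1)⁻¹) *
        (FreeGroup.mk t.1)⁻¹ := by
  cases hb : t.2.2 <;>
    simp [conjWord, hb, ← FreeGroup.mul_mk, ← FreeGroup.inv_mk, mk_sgn, mul_assoc]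

lemma mk_certProd_mem {R : Set (List (Fin k))} {L : Cert k}
    (hL : ∀ t ∈ L, t.2.1 ∈ R) :
    FreeGroup.mk (certProd L) ∈ Subgroup.normalClosure (freeWord '' R) := by
  induction L with
  | nil =>
    rw [certProd_nil]
    exact (Subgroup.normalClosure (freeWord '' R)).one_mem
  | cons t L ih =>
    rw [certProd_cons, ← FreeGroup.mul_mk]
    refine mul_mem ?_ (ih fun t' ht' => hL t' (List.mem_cons_of_mem _ ht'))
    rw [mk_conjWord]
    have hr : freeWord t.2.1 ∈ Subgroup.normalClosure (freeWord '' R) :=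
      Subgroup.subset_normalClosure ⟨t.2.1, hL t (List.mem_cons_self), rfl⟩
    have hx : (bif t.2.2 then freeWord t.2.1 else (freeWord t.2.1)⁻¹) ∈
        Subgroup.normalClosure (freeWord '' R) := by
      cases t.2.2
      · exact inv_mem hr
      · exact hr
    exact Subgroup.normalClosure_normal.conj_mem _ hx _

lemma exists_cert_of_mem {R : Set (List (Fin k))} {x : FreeGroup (Fin k)}
    (hx : x ∈ Subgroup.normalClosure (freeWord '' R)) :
    ∃ L : Cert k, (∀ t ∈ L, t.2.1 ∈ R) ∧ FreeGroup.mk (certProd L) = x := by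
  have h1 : x ∈ Submonoid.closure (Group.conjugatesOfSet (freeWord '' R) ∪
      (Group.conjugatesOfSet (freeWord '' R))⁻¹) := by
    rw [← Subgroup.closure_toSubmonoid]
    exact hx
  obtain ⟨l, hl, hprod⟩ := Submonoid.exists_list_of_mem_closure h1
  subst hprod
  clear h1 hx
  induction l with
  | nil => exact ⟨[], by simp, rfl⟩
  | cons y l ih =>
    obtain ⟨L, hL, hmk⟩ := ih fun z hz => hl z (List.mem_cons_of_mem _ hz)
    have hy := hl y (List.mem_cons_self)
    have hy' : ∃ t : List (Fin k × Bool) × List (Fin k) × Bool,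
        t.2.1 ∈ R ∧ FreeGroup.mk (conjWord t) = y := by
      rcases hy with hy | hy
      · obtain ⟨a, ⟨r, hr, rfl⟩, hconj⟩ := Group.mem_conjugatesOfSet_iff.1 hy
        obtain ⟨g, hg⟩ := isConj_iff.1 hconj
        refine ⟨(g.toWord, r, true), hr, ?_⟩
        rw [mk_conjWord]
        simpa [FreeGroup.mk_toWord] using hg
      · rw [Set.mem_inv] at hy
        obtain ⟨a, ⟨r, hr, rfl⟩, hconj⟩ := Group.mem_conjugatesOfSet_iff.1 hy
        obtain ⟨g, hg⟩ := isConj_iff.1 hconj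
        refine ⟨(g.toWord, r, false), hr, ?_⟩
        rw [mk_conjWord]
        simp only [FreeGroup.mk_toWord, Bool.cond_false]
        have : (g * freeWord r * g⁻¹)⁻¹ = y := by rw [hg]; exact inv_inv y
        rw [← this]
        simp [mul_assoc]
    obtain ⟨t, htR, hty⟩ := hy'
    refine ⟨t :: L, ?_, ?_⟩
    · intro t' ht'
      rcases List.mem_cons.1 ht' with rfl | ht'
      · exact htR
      · exact hL t' ht'
    · rw [certProd_cons, ← FreeGroup.mul_mk, hty, hmk, List.prod_cons]

lemma wp_iff_cert (S : Fin k → G) {R : Set (List (Fin k))}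
    (hker : MonoidHom.ker (FreeGroup.lift S) = Subgroup.normalClosure (freeWord '' R))
    (w : List (Fin k)) :
    wordEval S w = 1 ↔ ∃ L : Cert k, (∀ t ∈ L, t.2.1 ∈ R) ∧
      FreeGroup.reduce (sgn w ++ FreeGroup.invRev (certProd L)) = [] := by
  have h0 : wordEval S w = 1 ↔ freeWord w ∈ Subgroup.normalClosure (freeWord '' R) := by
    rw [← hker, MonoidHom.mem_ker, lift_freeWord]
  have h2 : ∀ L : Cert k,
      (FreeGroup.reduce (sgn w ++ FreeGroup.invRev (certProd L)) = [] ↔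
        FreeGroup.mk (certProd L) = freeWord w) := by
    intro L
    rw [← FreeGroup.toWord_mk, FreeGroup.toWord_eq_nil_iff, ← FreeGroup.mul_mk,
      ← FreeGroup.inv_mk, mk_sgn, mul_inv_eq_one]
    exact eq_comm
  constructor
  · intro hw
    obtain ⟨L, hL, hmk⟩ := exists_cert_of_mem (h0.1 hw)
    exact ⟨L, hL, (h2 L).2 hmk⟩
  · rintro ⟨L, hL, hred⟩
    refine h0.2 ?_
    rw [← (h2 L).1 hred]
    exact mk_certProd_mem hL

lemma ker_eq_wp (S : Fin k → G) (hsym : ∀ i, ∃ j, S j = (S i)⁻¹) :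
    MonoidHom.ker (FreeGroup.lift S) = Subgroup.normalClosure (freeWord '' WP S) := by
  choose j hj using hsym
  have hsub : freeWord '' WP S ⊆ (MonoidHom.ker (FreeGroup.lift S) : Set (FreeGroup (Fin k))) := by
    rintro _ ⟨w, hw, rfl⟩
    simpa [MonoidHom.mem_ker, lift_freeWord, WP] using hw
  refine le_antisymm ?_ (Subgroup.normalClosure_le_normal hsub)
  intro x hx
  set N := Subgroup.normalClosure (freeWord '' WP S) with hN
  have key : ∀ x : FreeGroup (Fin k), ∃ w, x⁻¹ * freeWord w ∈ N := by
    intro x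
    induction x using FreeGroup.induction_on with
    | C1 => exact ⟨[], by simpa [freeWord_nil] using N.one_mem⟩
    | of i =>
      refine ⟨[i], ?_⟩
      have h1 : (pure i : FreeGroup (Fin k)) = FreeGroup.of i := rfl
      have h2 : (FreeGroup.of i)⁻¹ * freeWord [i] = 1 := by
        rw [freeWord_cons, freeWord_nil, mul_one, inv_mul_cancel]
      rw [h2]; exact N.one_mem
    | inv_of i _ =>
      refine ⟨[j i], ?_⟩
      have h1 : (pure i : FreeGroup (Fin k)) = FreeGroup.of i := rfl
      rw [inv_inv]
      have hwp : [i, j i] ∈ WP S := by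
        show wordEval S [i, j i] = 1
        simp [wordEval, hj]
      have h2 : FreeGroup.of i * freeWord [j i] = freeWord [i, j i] := by
        simp [freeWord_cons, freeWord_nil]
      rw [h2]
      exact Subgroup.subset_normalClosure ⟨[i, j i], hwp, rfl⟩
    | mul x y hx' hy' =>
      obtain ⟨w₁, h₁⟩ := hx'
      obtain ⟨w₂, h₂⟩ := hy'
      refine ⟨w₁ ++ w₂, ?_⟩
      have he : (x * y)⁻¹ * freeWord (w₁ ++ w₂) =
          (y⁻¹ * (x⁻¹ * freeWord w₁) * y) * (y⁻¹ * freeWord w₂) := by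
        rw [freeWord_append]; group
      rw [he]
      exact mul_mem (Subgroup.Normal.conj_mem' Subgroup.normalClosure_normal _ h₁ y) h₂
  obtain ⟨w, hw⟩ := key x
  have hNker : N ≤ MonoidHom.ker (FreeGroup.lift S) :=
    Subgroup.normalClosure_le_normal hsub
  have hx1 : FreeGroup.lift S x = 1 := MonoidHom.mem_ker.1 hx
  have h1 : FreeGroup.lift S (freeWord w) = 1 := by
    have h3 : FreeGroup.lift S (x⁻¹ * freeWord w) = 1 := MonoidHom.mem_ker.1 (hNker hw)
    rw [map_mul, map_inv, hx1] at h3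
    simpa using h3
  have hwWP : w ∈ WP S := by
    show wordEval S w = 1
    rw [← lift_freeWord]; exact h1
  have hfw : freeWord w ∈ N := Subgroup.subset_normalClosure ⟨w, hwWP, rfl⟩
  have hxe : x = freeWord w * (x⁻¹ * freeWord w)⁻¹ := by group
  rw [hxe]
  exact mul_mem hfw (inv_mem hw)

end Certificates

section PrimrecCerts

variable {k : ℕ}

lemma primrec_sgn : Primrec (sgn (k := k)) :=
  Primrec.list_map Primrec.id ((Primrec.snd.pair (Primrec.const true)).to₂)

lemma primrec_invRev : Primrec (FreeGroup.invRev (α := Fin k)) := by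
  have h : Primrec fun w : List (Fin k × Bool) => (w.map fun g => (g.1, !g.2)).reverse :=
    Primrec.list_reverse.comp (Primrec.list_map Primrec.id
      (((Primrec.fst.comp Primrec.snd).pair
        (Primrec.not.comp (Primrec.snd.comp Primrec.snd))).to₂))
  exact h.of_eq fun w => rfl

lemma primrec_conjWord : Primrec (conjWord (k := k)) := by
  have h1 : Primrec fun t : List (Fin k × Bool) × List (Fin k) × Bool => t.2.1 :=
    Primrec.fst.comp Primrec.snd
  have h2 : Primrec fun t : List (Fin k × Bool) × List (Fin k) × Bool => t.2.2 :=
    Primrec.snd.comp Primrec.snd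
  exact Primrec.list_append.comp
    (Primrec.list_append.comp Primrec.fst
      (Primrec.cond h2 (primrec_sgn.comp h1) (primrec_invRev.comp (primrec_sgn.comp h1))))
    (primrec_invRev.comp Primrec.fst)

lemma primrec_certProd : Primrec (certProd (k := k)) := by
  have h : Primrec fun L : Cert k => (L.map conjWord).flatten :=
    Primrec.list_flatten.comp
      (Primrec.list_map Primrec.id ((primrec_conjWord.comp Primrec.snd).to₂))
  exact h.of_eq fun L => rfl

lemma primrec_reduce : Primrec (FreeGroup.reduce (α := Fin k)) := by
  have h : Primrec fun L : List (Fin k × Bool) =>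
      (List.recOn L ([] : List (Fin k × Bool)) fun x _ ih =>
        (List.casesOn ih [x] fun hd tl =>
          if x.1 = hd.1 ∧ x.2 = !hd.2 then tl else x :: hd :: tl :
            List (Fin k × Bool)) : List (Fin k × Bool)) := by
    have hx : Primrec fun r :
        (List (Fin k × Bool) × (Fin k × Bool) × List (Fin k × Bool) × List (Fin k × Bool)) ×
          (Fin k × Bool) × List (Fin k × Bool) => r.1.2.1 :=
      Primrec.fst.comp (Primrec.snd.comp Primrec.fst)
    have hhd : Primrec fun r :
        (List (Fin k × Bool) × (Fin k × Bool) × List (Fin k × Bool) × List (Fin k × Bool)) ×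
          (Fin k × Bool) × List (Fin k × Bool) => r.2.1 :=
      Primrec.fst.comp Primrec.snd
    have htl : Primrec fun r :
        (List (Fin k × Bool) × (Fin k × Bool) × List (Fin k × Bool) × List (Fin k × Bool)) ×
          (Fin k × Bool) × List (Fin k × Bool) => r.2.2 :=
      Primrec.snd.comp Primrec.snd
    have hstep : Primrec fun r :
        (List (Fin k × Bool) × (Fin k × Bool) × List (Fin k × Bool) × List (Fin k × Bool)) ×
          (Fin k × Bool) × List (Fin k × Bool) =>
        if r.1.2.1.1 = r.2.1.1 ∧ r.1.2.1.2 = !r.2.1.2 then r.2.2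
        else r.1.2.1 :: r.2.1 :: r.2.2 := by
      refine Primrec.ite ?_ htl (Primrec.list_cons.comp hx (Primrec.list_cons.comp hhd htl))
      exact PrimrecPred.and
        (PrimrecRel.comp Primrec.eq (Primrec.fst.comp hx) (Primrec.fst.comp hhd))
        (PrimrecRel.comp Primrec.eq (Primrec.snd.comp hx)
          (Primrec.not.comp (Primrec.snd.comp hhd)))
    have hcases : Primrec fun q :
        List (Fin k × Bool) × (Fin k × Bool) × List (Fin k × Bool) × List (Fin k × Bool) =>
        (List.casesOn q.2.2.2 [q.2.1] fun hd tl =>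
          if q.2.1.1 = hd.1 ∧ q.2.1.2 = !hd.2 then tl else q.2.1 :: hd :: tl :
            List (Fin k × Bool)) :=
      Primrec.list_casesOn (Primrec.snd.comp (Primrec.snd.comp Primrec.snd))
        (Primrec.list_cons.comp (Primrec.fst.comp Primrec.snd) (Primrec.const [])) hstep.to₂
    exact Primrec.list_rec Primrec.id (Primrec.const []) hcases.to₂
  have key : ∀ L : List (Fin k × Bool),
      (List.recOn L ([] : List (Fin k × Bool)) fun x _ ih =>
        (List.casesOn ih [x] fun hd tl =>
          if x.1 = hd.1 ∧ x.2 = !hd.2 then tl else x :: hd :: tl :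
            List (Fin k × Bool)) : List (Fin k × Bool)) = FreeGroup.reduce L := by
    intro L
    induction L with
    | nil => rfl
    | cons x L ih => rw [FreeGroup.reduce.cons, ← ih]
  exact h.of_eq key

/-- The certificate checker for the word problem. -/
def checkW (fR : List (Fin k) × ℕ → Bool) : List (Fin k) × ℕ → Bool := fun x =>
  Option.casesOn (Encodable.decode (α := ℕ × Cert k) x.2) false fun p =>
    (p.2.all fun t => (List.range p.1).any fun i => fR (t.2.1, i)) &&
      decide (FreeGroup.reduce (sgn x.1 ++ FreeGroup.invRev (certProd p.2)) = [])

lemma primrec_checkW {fR : List (Fin k) × ℕ → Bool} (hfR : Primrec fR) :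
    Primrec (checkW fR) := by
  have hinner2 : Primrec fun s : (((List (Fin k) × ℕ) × ℕ × Cert k) ×
      (List (Fin k × Bool) × List (Fin k) × Bool)) × ℕ => fR (s.1.2.2.1, s.2) :=
    hfR.comp ((Primrec.fst.comp (Primrec.snd.comp
      (Primrec.snd.comp Primrec.fst))).pair Primrec.snd)
  have hinner1 : Primrec fun r : ((List (Fin k) × ℕ) × ℕ × Cert k) ×
      (List (Fin k × Bool) × List (Fin k) × Bool) =>
      (List.range r.1.2.1).any fun i => fR (r.2.2.1, i) :=
    primrec_list_any
      (Primrec.list_range.comp (Primrec.fst.comp (Primrec.snd.comp Primrec.fst)))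
      hinner2.to₂
  have hall : Primrec fun q : (List (Fin k) × ℕ) × ℕ × Cert k =>
      q.2.2.all fun t => (List.range q.2.1).any fun i => fR (t.2.1, i) :=
    primrec_list_all (Primrec.snd.comp Primrec.snd) hinner1.to₂
  have hred : Primrec fun q : (List (Fin k) × ℕ) × ℕ × Cert k =>
      decide (FreeGroup.reduce (sgn q.1.1 ++ FreeGroup.invRev (certProd q.2.2)) = []) :=
    (PrimrecRel.comp Primrec.eq
      (primrec_reduce.comp (Primrec.list_append.comp
        (primrec_sgn.comp (Primrec.fst.comp Primrec.fst))
        (primrec_invRev.comp (primrec_certProd.comp (Primrec.snd.comp Primrec.snd)))))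
      (Primrec.const [])).decide
  have hbody : Primrec fun q : (List (Fin k) × ℕ) × ℕ × Cert k =>
      (q.2.2.all fun t => (List.range q.2.1).any fun i => fR (t.2.1, i)) &&
        decide (FreeGroup.reduce (sgn q.1.1 ++ FreeGroup.invRev (certProd q.2.2)) = []) :=
    Primrec.and.comp hall hred
  exact Primrec.option_casesOn (Primrec.decode.comp Primrec.snd)
    (Primrec.const false) hbody.to₂

lemma checkW_none {fR : List (Fin k) × ℕ → Bool} {w : List (Fin k)} {n : ℕ}
    (hd : (Encodable.decode n : Option (ℕ × Cert k)) = none) :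
    checkW fR (w, n) = false := by
  unfold checkW
  dsimp only
  rw [hd]

lemma checkW_some {fR : List (Fin k) × ℕ → Bool} {w : List (Fin k)} {n : ℕ} {p : ℕ × Cert k}
    (hd : (Encodable.decode n : Option (ℕ × Cert k)) = some p) :
    checkW fR (w, n) = ((p.2.all fun t => (List.range p.1).any fun i => fR (t.2.1, i)) &&
      decide (FreeGroup.reduce (sgn w ++ FreeGroup.invRev (certProd p.2)) = [])) := by
  unfold checkW
  dsimp only
  rw [hd]

lemma checkW_spec {G : Type} [Group G] (S : Fin k → G) {R : Set (List (Fin k))}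
    (hker : MonoidHom.ker (FreeGroup.lift S) = Subgroup.normalClosure (freeWord '' R))
    {fR : List (Fin k) × ℕ → Bool} (hfR : ∀ r, r ∈ R ↔ ∃ i, fR (r, i) = true)
    (w : List (Fin k)) :
    wordEval S w = 1 ↔ ∃ n, checkW fR (w, n) = true := by
  rw [wp_iff_cert S hker]
  constructor
  · rintro ⟨L, hL, hred⟩
    obtain ⟨m, hm⟩ := exists_bound_of_forall_exists (g := fun t i => fR (t.2.1, i))
      (fun t ht => (hfR _).1 (hL t ht))
    refine ⟨Encodable.encode ((m, L) : ℕ × Cert k), ?_⟩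
    rw [checkW_some (Encodable.encodek _)]
    simp only [Bool.and_eq_true, List.all_eq_true, List.any_eq_true, decide_eq_true_eq,
      List.mem_range]
    refine ⟨fun t ht => ?_, hred⟩
    obtain ⟨i, him, hi⟩ := hm t ht
    exact ⟨i, him, hi⟩
  · rintro ⟨n, hn⟩
    rcases hd : (Encodable.decode n : Option (ℕ × Cert k)) with _ | p
    · rw [checkW_none hd] at hn
      exact absurd hn Bool.false_ne_true
    · rw [checkW_some hd] at hn
      simp only [Bool.and_eq_true, List.all_eq_true, List.any_eq_true, decide_eq_true_eq,
        List.mem_range] at hn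
      obtain ⟨hall, hred⟩ := hn
      refine ⟨p.2, fun t ht => (hfR _).2 ?_, hred⟩
      obtain ⟨i, -, hi⟩ := hall t ht
      exact ⟨i, hi⟩

end PrimrecCerts

section PatternCodings

variable {G : Type} [Group G] {k : ℕ}

lemma not_consistent_iff (S : Fin k → G) {A : Type} (c : PatternCoding k A) :
    ¬ Consistent S c ↔
      ∃ p ∈ c, ∃ q ∈ c, wordEval S p.1 = wordEval S q.1 ∧ p.2 ≠ q.2 := by
  constructor
  · intro h
    by_contra hc
    push_neg at hc
    exact h fun p hp q hq he => hc p hp q hq he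
  · rintro ⟨p, hp, q, hq, he, hne⟩ h
    exact hne (h p hp q hq he)

lemma wp_iff_not_consistent (S : Fin k → G) {A : Type} {a0 b0 : A}
    (hab : a0 ≠ b0) (w : List (Fin k)) :
    wordEval S w = 1 ↔ ¬ Consistent S [(w, a0), (([] : List (Fin k)), b0)] := by
  rw [not_consistent_iff]
  constructor
  · intro h
    refine ⟨(w, a0), by simp, (([] : List (Fin k)), b0), by simp, ?_, hab⟩
    simpa [wordEval] using h
  · rintro ⟨p, hp, q, hq, he, hne⟩
    simp only [List.mem_cons, List.mem_singleton, List.not_mem_nil, or_false] at hp hq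
    rcases hp with rfl | rfl <;> rcases hq with rfl | rfl
    · exact absurd rfl hne
    · simpa [wordEval] using he
    · simpa [wordEval] using he.symm
    · exact absurd rfl hne

end PatternCodings

/-- For a finitely generated group `G` and an alphabet with at least two
symbols, the following are equivalent: `G` is recursively presented; the word problem of `G`
is recursively enumerable; the set of inconsistent pattern codings is recursively
enumerable. -/
theorem recursivelyPresented_tfae
    {G : Type} [Group G] {k : ℕ} (S : Fin k → G) (hS : IsGenData S)
    (A : Type) [Fintype A] [Primcodable A] (hA : 2 ≤ Fintype.card A) :
    (RecursivelyPresented S ↔ REPred (· ∈ WP S)) ∧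
    (REPred (· ∈ WP S) ↔ REPred fun c : PatternCoding k A => ¬ Consistent S c) := by
  classical
  obtain ⟨-, hsym, -⟩ := hS
  choose j hj using hsym
  letI : DecidableEq A := Encodable.decidableEqOfEncodable A
  have primrec_wInv : Primrec (wInv j) :=
    Primrec.list_map Primrec.list_reverse (((Primrec.dom_finite j).comp Primrec.snd).to₂)
  refine ⟨⟨?_, ?_⟩, ?_, ?_⟩
  · rintro ⟨R, hR, hker⟩
    obtain ⟨fR, hfRpr, hfRspec⟩ := exists_of_rePred hR
    refine rePred_of_exists (primrec_checkW hfRpr).to_comp fun w => ?_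
    exact checkW_spec S hker hfRspec w
  · intro hWP
    exact ⟨WP S, hWP, ker_eq_wp S fun i => ⟨j i, hj i⟩⟩
  · intro hWP
    obtain ⟨f, hf, hfspec⟩ := exists_of_rePred hWP
    have hg : Primrec fun x : PatternCoding k A × ℕ =>
        x.1.any fun p => x.1.any fun q =>
          (!decide (p.2 = q.2)) && f (p.1 ++ wInv j q.1, x.2) := by
      have hinner2 : Primrec fun s : ((PatternCoding k A × ℕ) × (List (Fin k) × A)) ×
          (List (Fin k) × A) =>
          (!decide (s.1.2.2 = s.2.2)) && f (s.1.2.1 ++ wInv j s.2.1, s.1.1.2) := by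
        refine Primrec.and.comp ?_ ?_
        · exact Primrec.not.comp (PrimrecRel.comp Primrec.eq
            (Primrec.snd.comp (Primrec.snd.comp Primrec.fst)) (Primrec.snd.comp Primrec.snd)).decide
        · exact hf.comp ((Primrec.list_append.comp
              (Primrec.fst.comp (Primrec.snd.comp Primrec.fst))
              (primrec_wInv.comp (Primrec.fst.comp Primrec.snd))).pair
            (Primrec.snd.comp (Primrec.fst.comp Primrec.fst)))
      have hinner1 : Primrec fun r : (PatternCoding k A × ℕ) × (List (Fin k) × A) =>
          r.1.1.any fun q => (!decide (r.2.2 = q.2)) && f (r.2.1 ++ wInv j q.1, r.1.2) :=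
        primrec_list_any (Primrec.fst.comp Primrec.fst) hinner2.to₂
      exact primrec_list_any Primrec.fst hinner1.to₂
    refine rePred_of_exists hg.to_comp fun c => ?_
    rw [not_consistent_iff]
    constructor
    · rintro ⟨p, hp, q, hq, he, hne⟩
      have h1 : wordEval S (p.1 ++ wInv j q.1) = 1 := by
        rw [wordEval_append, wordEval_wInv S hj, he, mul_inv_cancel]
      obtain ⟨n, hn⟩ := (hfspec _).1 h1
      refine ⟨n, ?_⟩
      rw [List.any_eq_true]
      refine ⟨p, hp, ?_⟩
      rw [List.any_eq_true]
      exact ⟨q, hq, by simp [hne, hn]⟩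
    · rintro ⟨n, hn⟩
      simp only [List.any_eq_true, Bool.and_eq_true, Bool.not_eq_true',
        decide_eq_false_iff_not] at hn
      obtain ⟨p, hp, q, hq, hne, hf1⟩ := hn
      refine ⟨p, hp, q, hq, ?_, hne⟩
      have h1 : wordEval S (p.1 ++ wInv j q.1) = 1 := (hfspec _).2 ⟨n, hf1⟩
      rw [wordEval_append, wordEval_wInv S hj, mul_inv_eq_one] at h1
      exact h1
  · intro hInc
    obtain ⟨a0, b0, hab⟩ := Fintype.exists_pair_of_one_lt_card hA
    obtain ⟨f, hf, hfspec⟩ := exists_of_rePred hInc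
    have hg : Primrec fun x : List (Fin k) × ℕ =>
        f ([(x.1, a0), (([] : List (Fin k)), b0)], x.2) :=
      hf.comp ((Primrec.list_cons.comp (Primrec.fst.pair (Primrec.const a0))
        (Primrec.list_cons.comp (Primrec.const (([] : List (Fin k)), b0))
          (Primrec.const []))).pair Primrec.snd)
    refine rePred_of_exists hg.to_comp fun w => ?_
    show wordEval S w = 1 ↔ _
    rw [wp_iff_not_consistent S hab w]
    exact hfspec _

end SDG
end
end
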